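/- Let m ≥ n ≥ 1, let F(n,m) be the set of all frames Φ ∈ 𝕂^{n×m}, and let N(n,m) ⊂ F(n,m) be the set of frames whose sparsest dual frame has exactly n² non-zero entries. Then the set F(n,m) \ N(n,m) has (induced Euclidean) Lebesgue measure zero in 𝕂^{n×m}. -/

import Mathlib

open Matrix MeasureTheory

/-- The number of non-vanishing entries of a matrix (the `ℓ₀`-"norm"). -/
noncomputable def l0Norm {𝕂 : Type} [RCLike 𝕂] {n m : ℕ}
    (Ψ : Matrix (Fin n) (Fin m) 𝕂) : ℕ :=
  Set.ncard {p : Fin n × Fin m | Ψ p.1 p.2 ≠ 0}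

/-- `F(n,m)`: the set of all frames of `m` vectors for `𝕂^n`, i.e. rank-`n` matrices. -/
def frameSet (𝕂 : Type) [RCLike 𝕂] (n m : ℕ) : Set (Matrix (Fin n) (Fin m) 𝕂) :=
  {Φ | Φ.rank = n}

/-- `N(n,m)`: the set of frames in `𝕂^{n×m}` whose sparsest dual frame has exactly
`n²` non-zero entries. -/
def maxSparsityFrames (𝕂 : Type) [RCLike 𝕂] (n m : ℕ) :
    Set (Matrix (Fin n) (Fin m) 𝕂) :=
  {Φ | Φ.rank = n ∧
    IsLeast {c | ∃ Ψ : Matrix (Fin n) (Fin m) 𝕂, Ψ * Φᴴ = 1 ∧ l0Norm Ψ = c} (n ^ 2)}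

/-- Lebesgue measure on the space of `n × m` matrices over `𝕂`, obtained as the product
(Euclidean) measure from the measure on `𝕂`. -/
noncomputable instance matrixMeasureSpace {𝕂 : Type} [RCLike 𝕂] [MeasureSpace 𝕂]
    [SigmaFinite (volume : Measure 𝕂)] {n m : ℕ} :
    MeasureSpace (Matrix (Fin n) (Fin m) 𝕂) :=
  inferInstanceAs (MeasureSpace (Fin n → Fin m → 𝕂))


section Aux

open MvPolynomial in
private lemma measurable_mveval {𝕂 : Type} [RCLike 𝕂] [MeasureSpace 𝕂] [BorelSpace 𝕂]
    {ι : Type*} (p : MvPolynomial ι 𝕂) :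
    Measurable fun x : ι → 𝕂 => MvPolynomial.eval x p := by
  induction p using MvPolynomial.induction_on with
  | C a => simpa using measurable_const
  | add p q hp hq => simp only [map_add]; exact hp.add hq
  | mul_X p i hp => simp only [map_mul, MvPolynomial.eval_X]; exact hp.mul (measurable_pi_apply i)

private lemma eval2_eq_eval_evalC {𝕂 : Type} [RCLike 𝕂] {k : ℕ}
    (q : Polynomial (MvPolynomial (Fin k) 𝕂)) (y : 𝕂) (s : Fin k → 𝕂) :
    Polynomial.eval₂ (MvPolynomial.eval s) y q
      = MvPolynomial.eval s (Polynomial.eval (MvPolynomial.C y) q) := by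
  have : (Polynomial.eval₂RingHom (MvPolynomial.eval s) y)
      = (MvPolynomial.eval s).comp (Polynomial.evalRingHom (MvPolynomial.C y)) := by
    apply Polynomial.ringHom_ext <;> simp
  exact DFunLike.congr_fun this q

variable {𝕂 : Type} [RCLike 𝕂] [MeasureSpace 𝕂] [BorelSpace 𝕂]
    [SigmaFinite (volume : Measure 𝕂)] [(volume : Measure 𝕂).IsAddHaarMeasure]

private lemma polyA {k : ℕ} (p : MvPolynomial (Fin k) 𝕂) (hp : p ≠ 0) :
    volume {x : Fin k → 𝕂 | MvPolynomial.eval x p = 0} = 0 := by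
  induction k with
  | zero =>
    obtain ⟨c, rfl⟩ := MvPolynomial.C_surjective (Fin 0) p
    have hc : c ≠ 0 := fun h => hp (by simp [h])
    simp [hc]
  | succ k ih =>
    set q : Polynomial (MvPolynomial (Fin k) 𝕂) := MvPolynomial.finSuccEquiv 𝕂 k p with hq
    have hq0 : q ≠ 0 := by
      simp only [hq, ne_eq, EmbeddingLike.map_eq_zero_iff]
      exact hp
    set T : Set (𝕂 × (Fin k → 𝕂)) :=
      {z | MvPolynomial.eval z.2 (Polynomial.eval (MvPolynomial.C z.1) q) = 0} with hT
    have hTm : MeasurableSet T := by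
      have : Measurable fun z : 𝕂 × (Fin k → 𝕂) =>
          MvPolynomial.eval z.2 (Polynomial.eval (MvPolynomial.C z.1) q) := by
        have : ∀ z : 𝕂 × (Fin k → 𝕂),
            MvPolynomial.eval z.2 (Polynomial.eval (MvPolynomial.C z.1) q)
            = ∑ i ∈ q.support, MvPolynomial.eval z.2 (q.coeff i) * z.1 ^ i := by
          intro z
          rw [← eval2_eq_eval_evalC, Polynomial.eval₂_eq_sum, Polynomial.sum]
        simp only [this]
        exact Finset.measurable_sum _ fun i _ =>
          ((measurable_mveval _).comp measurable_snd).mul (measurable_fst.pow_const i)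
      exact this (measurableSet_singleton 0)
    have key : (volume : Measure (𝕂 × (Fin k → 𝕂))) T = 0 := by
      have : (volume : Measure (𝕂 × (Fin k → 𝕂))) = (volume : Measure 𝕂).prod volume := rfl
      rw [this, MeasureTheory.Measure.measure_prod_null hTm]
      have hE : Set.Finite {y : 𝕂 | Polynomial.eval (MvPolynomial.C y) q = 0} := by
        have : {y : 𝕂 | Polynomial.eval (MvPolynomial.C y) q = 0}
            ⊆ MvPolynomial.C ⁻¹' {z | Polynomial.IsRoot q z} := fun y hy => hy
        exact Set.Finite.preimage (MvPolynomial.C_injective _ _).injOn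
          (Polynomial.finite_setOf_isRoot hq0) |>.subset this
      filter_upwards [hE.measure_zero volume |> measure_eq_zero_iff_ae_notMem.mp] with y hy
      have hqy : Polynomial.eval (MvPolynomial.C y) q ≠ 0 := hy
      exact ih _ hqy
    have hval : ∀ x : Fin (k + 1) → 𝕂, MvPolynomial.eval x p
        = MvPolynomial.eval (fun j => x j.succ) (Polynomial.eval (MvPolynomial.C (x 0)) q) := by
      intro x
      conv_lhs => rw [show x = Fin.cons (x 0) (fun j => x j.succ) from
        funext fun j => by cases j using Fin.cases <;> simp]
      rw [MvPolynomial.eval_eq_eval_mv_eval', Polynomial.eval_map, eval2_eq_eval_evalC, hq]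
    have hmp := volume_preserving_piFinSuccAbove (fun _ : Fin (k + 1) => 𝕂) 0
    have hpre : {x : Fin (k + 1) → 𝕂 | MvPolynomial.eval x p = 0}
        = (MeasurableEquiv.piFinSuccAbove (fun _ : Fin (k + 1) => 𝕂) 0) ⁻¹' T := by
      ext x
      simp only [Set.mem_setOf_eq, Set.mem_preimage, hT, MeasurableEquiv.piFinSuccAbove,
        MeasurableEquiv.coe_mk, MeasurableEquiv.piFinSuccAbove_apply, Fin.succAbove_zero,
        Fin.removeNth]
      rw [hval]
      simp [Fin.removeNth, Fin.succAbove_zero]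
      rfl
    rw [hpre, hmp.measure_preimage hTm.nullMeasurableSet]
    exact key

private def rowSplit (n m : ℕ) : Fin (n + 1) × Fin m ≃ (Fin n × Fin m) ⊕ Fin m where
  toFun v := Fin.cases (Sum.inr v.2) (fun i' => Sum.inl (i', v.2)) v.1
  invFun w := Sum.elim (fun t => (t.1.succ, t.2)) (fun j => ((0 : Fin (n + 1)), j)) w
  left_inv := by rintro ⟨i, j⟩; cases i using Fin.cases <;> simp
  right_inv := by rintro (⟨i, j⟩ | j) <;> simp

private lemma eval_sumToIter {S T : Type} (x : S → 𝕂) (y : T → 𝕂) (p : MvPolynomial (S ⊕ T) 𝕂) :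
    MvPolynomial.eval (Sum.elim x y) p
      = MvPolynomial.eval x
          (MvPolynomial.map (MvPolynomial.eval y) (MvPolynomial.sumToIter 𝕂 S T p)) := by
  have : (MvPolynomial.eval (Sum.elim x y))
      = ((MvPolynomial.eval x).comp
          ((MvPolynomial.map (MvPolynomial.eval y)).comp (MvPolynomial.sumToIter 𝕂 S T))) := by
    apply MvPolynomial.ringHom_ext
    · intro c; simp [MvPolynomial.sumToIter_C]
    · rintro (s | t) <;> simp [MvPolynomial.sumToIter_Xl, MvPolynomial.sumToIter_Xr]
  exact DFunLike.congr_fun this p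

private lemma polyM {m : ℕ} : ∀ {n : ℕ} (p : MvPolynomial (Fin n × Fin m) 𝕂), p ≠ 0 →
    volume {Φ : Fin n → Fin m → 𝕂 | MvPolynomial.eval (fun v => Φ v.1 v.2) p = 0} = 0 := by
  intro n
  induction n with
  | zero =>
    intro p hp
    obtain ⟨c, rfl⟩ := MvPolynomial.C_surjective (Fin 0 × Fin m) p
    have hc : c ≠ 0 := fun h => hp (by simp [h])
    simp [hc]
  | succ n ih =>
    intro p hp
    set E := rowSplit n m with hE
    set p' := MvPolynomial.rename (E : _ → _) p with hp'def
    have hp' : p' ≠ 0 := fun h =>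
      hp (MvPolynomial.rename_injective _ E.injective (by simpa using h))
    set q := MvPolynomial.sumToIter 𝕂 (Fin n × Fin m) (Fin m) p' with hqdef
    have hq0 : q ≠ 0 := by
      have : q = MvPolynomial.sumAlgEquiv 𝕂 (Fin n × Fin m) (Fin m) p' := by
        have h : MvPolynomial.sumToIter 𝕂 (Fin n × Fin m) (Fin m)
            = (MvPolynomial.sumAlgEquiv 𝕂 (Fin n × Fin m) (Fin m)).toRingEquiv.toRingHom := by
          apply MvPolynomial.ringHom_ext
          · intro c; simp [MvPolynomial.sumToIter_C]
          · rintro (s | t) <;> simp [MvPolynomial.sumToIter_Xl, MvPolynomial.sumToIter_Xr]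
        exact DFunLike.congr_fun h p'
      rw [this, ne_eq, EmbeddingLike.map_eq_zero_iff]
      exact hp'
    set T : Set ((Fin m → 𝕂) × (Fin n → Fin m → 𝕂)) :=
      {z | MvPolynomial.eval (fun t => z.2 t.1 t.2)
            (MvPolynomial.map (MvPolynomial.eval z.1) q) = 0} with hT
    have hfun : ∀ z : (Fin m → 𝕂) × (Fin n → Fin m → 𝕂),
        MvPolynomial.eval (fun t : Fin n × Fin m => z.2 t.1 t.2)
            (MvPolynomial.map (MvPolynomial.eval z.1) q)
          = MvPolynomial.eval (Sum.elim (fun t : Fin n × Fin m => z.2 t.1 t.2) z.1) p' :=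
      fun z => (eval_sumToIter _ _ _).symm
    have hTm : MeasurableSet T := by
      have hmeas : Measurable fun z : (Fin m → 𝕂) × (Fin n → Fin m → 𝕂) =>
          MvPolynomial.eval (Sum.elim (fun t : Fin n × Fin m => z.2 t.1 t.2) z.1) p' := by
        refine (measurable_mveval p').comp (measurable_pi_lambda _ fun v => ?_)
        rcases v with t | j
        · exact (measurable_pi_apply t.2).comp ((measurable_pi_apply t.1).comp measurable_snd)
        · exact (measurable_pi_apply j).comp measurable_fst
      have : T = {z | MvPolynomial.eval
          (Sum.elim (fun t : Fin n × Fin m => z.2 t.1 t.2) z.1) p' = 0} := by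
        ext z; simp only [hT, Set.mem_setOf_eq, hfun]
      rw [this]
      exact hmeas (measurableSet_singleton 0)
    have key : (volume : Measure ((Fin m → 𝕂) × (Fin n → Fin m → 𝕂))) T = 0 := by
      have hvol : (volume : Measure ((Fin m → 𝕂) × (Fin n → Fin m → 𝕂)))
          = (volume : Measure (Fin m → 𝕂)).prod volume := rfl
      rw [hvol, MeasureTheory.Measure.measure_prod_null hTm]
      obtain ⟨d, hd⟩ := MvPolynomial.ne_zero_iff.mp hq0
      have hnull := polyA (MvPolynomial.coeff d q) hd
      filter_upwards [measure_eq_zero_iff_ae_notMem.mp hnull] with r hr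
      have hmap : MvPolynomial.map (MvPolynomial.eval r) q ≠ 0 := by
        intro h
        apply hr
        have := congrArg (MvPolynomial.coeff d) h
        rw [MvPolynomial.coeff_map] at this
        simpa using this
      have hset : Prod.mk r ⁻¹' T
          = {Ψ : Fin n → Fin m → 𝕂 | MvPolynomial.eval (fun t : Fin n × Fin m => Ψ t.1 t.2)
              (MvPolynomial.map (MvPolynomial.eval r) q) = 0} := rfl
      rw [hset]
      exact ih _ hmap
    have hmp := volume_preserving_piFinSuccAbove (fun _ : Fin (n + 1) => (Fin m → 𝕂)) 0
    have hpre : {Φ : Fin (n + 1) → Fin m → 𝕂 | MvPolynomial.eval (fun v => Φ v.1 v.2) p = 0}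
        = (MeasurableEquiv.piFinSuccAbove (fun _ : Fin (n + 1) => (Fin m → 𝕂)) 0) ⁻¹' T := by
      ext Φ
      have hchain : MvPolynomial.eval (fun v : Fin (n + 1) × Fin m => Φ v.1 v.2) p
          = MvPolynomial.eval
              (Sum.elim (fun t : Fin n × Fin m => Φ t.1.succ t.2) (fun j => Φ 0 j)) p' := by
        rw [hp'def, MvPolynomial.eval_rename]
        have hfn : (Sum.elim (fun t : Fin n × Fin m => Φ t.1.succ t.2) (fun j => Φ 0 j)
            ∘ (E : _ → _)) = fun v : Fin (n + 1) × Fin m => Φ v.1 v.2 := by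
          funext v
          rcases v with ⟨i, j⟩
          cases i using Fin.cases <;> simp [hE, rowSplit]
        rw [hfn]
      simp only [Set.mem_setOf_eq, Set.mem_preimage, hT, MeasurableEquiv.piFinSuccAbove,
        MeasurableEquiv.coe_mk, MeasurableEquiv.piFinSuccAbove_apply, Fin.succAbove_zero, Fin.removeNth]
      rw [hchain, hfun]
      rfl
    rw [hpre, hmp.measure_preimage hTm.nullMeasurableSet]
    exact key

private lemma polyMat {n m : ℕ} (p : MvPolynomial (Fin n × Fin m) 𝕂) (hp : p ≠ 0) :
    volume {Φ : Matrix (Fin n) (Fin m) 𝕂 | MvPolynomial.eval (fun v => Φ v.1 v.2) p = 0} = 0 :=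
  polyM p hp

private lemma l0Norm_eq_sum {n m : ℕ} (Ψ : Matrix (Fin n) (Fin m) 𝕂) :
    l0Norm Ψ = ∑ i : Fin n, {j : Fin m | Ψ i j ≠ 0}.ncard := by
  classical
  rw [l0Norm, ← Nat.card_coe_set_eq]
  have h2 := Nat.card_congr
    (Equiv.subtypeProdEquivSigmaSubtype fun (i : Fin n) (j : Fin m) => Ψ i j ≠ 0)
  rw [Nat.card_eq_fintype_card, Nat.card_eq_fintype_card, Fintype.card_sigma] at h2
  refine ((Nat.card_eq_fintype_card).trans h2).trans (Finset.sum_congr rfl fun i _ => ?_)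
  convert (Nat.card_eq_fintype_card (α := {j // Ψ i j ≠ 0})).symm.trans (Nat.card_coe_set_eq _)
  rfl

private noncomputable def pZero (𝕂 : Type) [RCLike 𝕂] (k m : ℕ) (hnm : k + 1 ≤ m) :
    MvPolynomial (Fin (k + 1) × Fin m) 𝕂 :=
  (Matrix.of fun a b : Fin (k + 1) => MvPolynomial.X (a, Fin.castLE hnm b)).det

private noncomputable def pB (𝕂 : Type) [RCLike 𝕂] (k m : ℕ) (g : Fin k → Fin m)
    (i : Fin (k + 1)) : MvPolynomial (Fin (k + 1) × Fin m) 𝕂 :=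
  (Matrix.of fun a b => Fin.lastCases (if a = i then 1 else 0)
    (fun b' => MvPolynomial.X (a, g b')) b).det

private def BM {k m : ℕ} (Φ : Matrix (Fin (k + 1)) (Fin m) 𝕂) (g : Fin k → Fin m)
    (i : Fin (k + 1)) : Matrix (Fin (k + 1)) (Fin (k + 1)) 𝕂 :=
  Matrix.of fun a b => Fin.lastCases (if a = i then 1 else 0) (fun b' => Φ a (g b')) b

private lemma eval_pZero {k m : ℕ} (hnm : k + 1 ≤ m) (Φ : Matrix (Fin (k + 1)) (Fin m) 𝕂) :
    MvPolynomial.eval (fun v : Fin (k + 1) × Fin m => Φ v.1 v.2) (pZero 𝕂 k m hnm)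
      = (Φ.submatrix id (Fin.castLE hnm)).det := by
  rw [pZero, RingHom.map_det]
  congr 1
  ext a b
  simp

private lemma eval_pB {k m : ℕ} (Φ : Matrix (Fin (k + 1)) (Fin m) 𝕂) (g : Fin k → Fin m)
    (i : Fin (k + 1)) :
    MvPolynomial.eval (fun v : Fin (k + 1) × Fin m => Φ v.1 v.2) (pB 𝕂 k m g i)
      = (BM Φ g i).det := by
  rw [pB, RingHom.map_det]
  congr 1
  ext a b
  cases b using Fin.lastCases with
  | last => simp [BM, apply_ite]
  | cast b' => simp [BM]

private lemma pZero_ne {k m : ℕ} (hnm : k + 1 ≤ m) : pZero 𝕂 k m hnm ≠ 0 := by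
  intro h
  have h1 := eval_pZero hnm
    (Matrix.of fun (a : Fin (k + 1)) (j : Fin m) => if (j : ℕ) = (a : ℕ) then (1 : 𝕂) else 0)
  rw [h] at h1
  have h2 : (Matrix.of fun (a : Fin (k + 1)) (j : Fin m) => if (j : ℕ) = (a : ℕ) then (1 : 𝕂) else 0).submatrix
      id (Fin.castLE hnm) = 1 := by
    ext a b
    simp only [Matrix.submatrix_apply, Matrix.of_apply, id, Matrix.one_apply, Fin.coe_castLE]
    refine if_congr ?_ rfl rfl
    rw [Fin.val_eq_val, eq_comm]
  rw [h2] at h1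
  simp at h1

private lemma pB_ne {k m : ℕ} (g : Fin k ↪ Fin m) (i : Fin (k + 1)) :
    pB 𝕂 k m g i ≠ 0 := by
  classical
  intro h
  set Φs : Matrix (Fin (k + 1)) (Fin m) 𝕂 :=
    Matrix.of fun a j => if ∃ b', g b' = j ∧ i.succAbove b' = a then (1 : 𝕂) else 0 with hΦs
  set τ : Equiv.Perm (Fin (k + 1)) := finSuccEquivLast.trans (finSuccEquiv' i).symm with hτ
  have hperm : BM Φs (g : Fin k → Fin m) i = (Equiv.Perm.permMatrix 𝕂 τ)ᵀ := by
    ext a b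
    rw [Matrix.transpose_apply]
    have hPM : Equiv.Perm.permMatrix 𝕂 τ b a = if τ b = a then 1 else 0 := by
      simp [Equiv.Perm.permMatrix, PEquiv.toMatrix_apply, Equiv.toPEquiv_apply, Option.mem_def,
        eq_comm]
    rw [hPM]
    cases b using Fin.lastCases with
    | last =>
      have : τ (Fin.last k) = i := by simp [hτ]
      rw [this]
      simp only [BM, Matrix.of_apply, Fin.lastCases_last]
      exact if_congr (by constructor <;> exact fun h => h.symm) rfl rfl
    | cast b' =>
      have : τ b'.castSucc = i.succAbove b' := by simp [hτ]
      rw [this]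
      simp only [BM, Matrix.of_apply, Fin.lastCases_castSucc, hΦs]
      refine if_congr ?_ rfl rfl
      constructor
      · rintro ⟨c, hc1, hc2⟩
        rwa [g.injective hc1] at hc2
      · exact fun h => ⟨b', rfl, h⟩
  have h1 := eval_pB Φs (g : Fin k → Fin m) i
  rw [h, hperm, map_zero, Matrix.det_transpose, Matrix.det_permutation] at h1
  rcases Int.units_eq_one_or (Equiv.Perm.sign τ) with hs | hs <;>
    rw [hs] at h1 <;> simp at h1

private lemma row_card {k m : ℕ} (hnm : k + 1 ≤ m) (Φ : Matrix (Fin (k + 1)) (Fin m) 𝕂)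
    (HB : ∀ (g : Fin k ↪ Fin m) (i : Fin (k + 1)), (BM Φ (g : Fin k → Fin m) i).det ≠ 0)
    (Ψ : Matrix (Fin (k + 1)) (Fin m) 𝕂) (hΨ : Ψ * Φᴴ = 1) (i : Fin (k + 1)) :
    k + 1 ≤ {j : Fin m | Ψ i j ≠ 0}.ncard := by
  classical
  by_contra hlt
  push_neg at hlt
  set s : Finset (Fin m) := Finset.univ.filter (fun j => Ψ i j ≠ 0) with hs
  have hsncard : {j : Fin m | Ψ i j ≠ 0}.ncard = s.card := by
    rw [← Set.ncard_coe_finset]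
    congr 1
    ext j
    simp [hs]
  have hcard : s.card ≤ k := by omega
  obtain ⟨U, hsU, hUcard⟩ := Finset.exists_superset_card_eq hcard
    (by rw [Fintype.card_fin]; omega)
  set iso := U.orderIsoOfFin hUcard with hiso
  set g : Fin k ↪ Fin m := ⟨fun b => (iso b : Fin m),
    fun a b h => iso.injective (Subtype.ext h)⟩ with hg
  have hzero : ∀ j : Fin m, j ∉ U → Ψ i j = 0 := by
    intro j hj
    by_contra hne
    exact hj (hsU (by simp [hs, hne]))
  have hdual : ∀ a, ∑ b' : Fin k, star (Ψ i (g b')) * Φ a (g b')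
      = if i = a then 1 else 0 := by
    intro a
    have h0 : (Ψ * Φᴴ) i a = (1 : Matrix (Fin (k + 1)) (Fin (k + 1)) 𝕂) i a := by rw [hΨ]
    have h1 : ∑ j, Ψ i j * star (Φ a j) = if i = a then (1 : 𝕂) else 0 := by
      simpa [Matrix.mul_apply, Matrix.conjTranspose_apply, Matrix.one_apply] using h0
    have h2 : ∑ j, star (Ψ i j) * Φ a j = if i = a then (1 : 𝕂) else 0 := by
      have := congrArg (starRingEnd 𝕂) h1
      simpa [map_sum, mul_comm, apply_ite] using this
    calc ∑ b' : Fin k, star (Ψ i (g b')) * Φ a (g b')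
        = ∑ x : {x // x ∈ U}, star (Ψ i x) * Φ a x :=
          Fintype.sum_equiv iso.toEquiv _ _ (fun b => rfl)
      _ = ∑ j ∈ U, star (Ψ i j) * Φ a j := Finset.sum_coe_sort U (fun j => star (Ψ i j) * Φ a j)
      _ = ∑ j, star (Ψ i j) * Φ a j :=
          Finset.sum_subset (Finset.subset_univ U)
            (fun j _ hj => by rw [hzero j hj]; simp)
      _ = if i = a then 1 else 0 := h2
  have hdet : (BM Φ (g : Fin k → Fin m) i).det = 0 := by
    rw [← Matrix.exists_mulVec_eq_zero_iff]
    refine ⟨fun b => Fin.lastCases (-1 : 𝕂) (fun b' => star (Ψ i (g b'))) b, ?_, ?_⟩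
    · intro h0
      have := congrFun h0 (Fin.last k)
      simp at this
    · funext a
      simp only [Matrix.mulVec, dotProduct]
      rw [Fin.sum_univ_castSucc]
      simp only [BM, Matrix.of_apply, Fin.lastCases_castSucc, Fin.lastCases_last]
      rw [show ∑ b' : Fin k, Φ a (g b') * star (Ψ i (g b'))
          = ∑ b' : Fin k, star (Ψ i (g b')) * Φ a (g b') from
        Finset.sum_congr rfl fun _ _ => mul_comm _ _]
      rw [hdual a]
      rcases eq_or_ne i a with h | h
      · subst h; simp
      · simp [h, show ¬a = i from fun hh => h hh.symm]
  exact HB g i hdet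

end Aux

/-- For `m ≥ n ≥ 1`, the set `F(n,m) \ N(n,m)` of frames whose
sparsest dual does not have exactly `n²` non-zero entries has Lebesgue measure zero
(where the Lebesgue measure on `𝕂 = ℝ` or `ℂ` is formalized as an additive Haar
measure). -/
theorem frames_not_max_sparsity_measure_zero {𝕂 : Type} [RCLike 𝕂]
    [MeasureSpace 𝕂] [BorelSpace 𝕂] [SigmaFinite (volume : Measure 𝕂)]
    [(volume : Measure 𝕂).IsAddHaarMeasure] {n m : ℕ}
    (hn : 1 ≤ n) (hnm : n ≤ m) :
    volume (frameSet 𝕂 n m \ maxSparsityFrames 𝕂 n m) = 0 := by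
  classical
  obtain ⟨k, rfl⟩ : ∃ k, n = k + 1 := ⟨n - 1, (Nat.succ_pred_eq_of_pos hn).symm⟩
  set Bad : Set (Matrix (Fin (k + 1)) (Fin m) 𝕂) :=
    {Φ | MvPolynomial.eval (fun v : Fin (k + 1) × Fin m => Φ v.1 v.2) (pZero 𝕂 k m hnm) = 0}
    ∪ ⋃ (g : Fin k ↪ Fin m), ⋃ (i : Fin (k + 1)),
      {Φ | MvPolynomial.eval (fun v : Fin (k + 1) × Fin m => Φ v.1 v.2) (pB 𝕂 k m g i) = 0}
    with hBad
  have hBadNull : volume Bad = 0 := by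
    rw [hBad]
    refine measure_union_null (polyMat _ (pZero_ne hnm)) ?_
    exact measure_iUnion_null fun g => measure_iUnion_null fun i => polyMat _ (pB_ne g i)
  refine measure_mono_null ?_ hBadNull
  intro Φ hΦ
  by_contra hnb
  apply hΦ.2
  have H0 : (Φ.submatrix id (Fin.castLE hnm)).det ≠ 0 := by
    intro h
    exact hnb (Or.inl (show _ = 0 by rw [eval_pZero]; exact h))
  have HB : ∀ (g : Fin k ↪ Fin m) (i : Fin (k + 1)),
      (BM Φ (g : Fin k → Fin m) i).det ≠ 0 := by
    intro g i h
    refine hnb (Or.inr (Set.mem_iUnion.mpr ⟨g, Set.mem_iUnion.mpr ⟨i, ?_⟩⟩))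
    show _ = 0
    rw [eval_pB]
    exact h
  have hlower : ∀ Ψ : Matrix (Fin (k + 1)) (Fin m) 𝕂, Ψ * Φᴴ = 1 →
      (k + 1) ^ 2 ≤ l0Norm Ψ := by
    intro Ψ hΨ
    rw [l0Norm_eq_sum]
    calc (k + 1) ^ 2 = ∑ _i : Fin (k + 1), (k + 1) := by
          simp [Finset.sum_const, sq]
      _ ≤ ∑ i : Fin (k + 1), {j : Fin m | Ψ i j ≠ 0}.ncard :=
          Finset.sum_le_sum fun i _ => row_card hnm Φ HB Ψ hΨ i
  refine ⟨hΦ.1, ?_, ?_⟩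
  · -- membership: there is a dual with exactly (k+1)^2 nonzero entries
    set A := Φ.submatrix id (Fin.castLE hnm) with hA
    have hAunit : IsUnit A.det := isUnit_iff_ne_zero.mpr H0
    set Ec : Matrix (Fin m) (Fin (k + 1)) 𝕂 :=
      Matrix.of fun j b => if Fin.castLE hnm b = j then (1 : 𝕂) else 0 with hEc
    have hAE : Φ * Ec = A := by
      ext a b
      rw [Matrix.mul_apply]
      simp only [hEc, Matrix.of_apply, mul_ite, mul_one, mul_zero]
      rw [Finset.sum_ite_eq Finset.univ (Fin.castLE hnm b) (fun j => Φ a j)]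
      simp [hA]
    set Ψ₀ : Matrix (Fin (k + 1)) (Fin m) 𝕂 := (Aᴴ)⁻¹ * Ecᴴ with hΨ₀
    have hAHdet : IsUnit (Aᴴ).det := by
      rw [Matrix.det_conjTranspose]
      exact (isUnit_star).mpr hAunit
    have hdual : Ψ₀ * Φᴴ = 1 := by
      rw [hΨ₀, Matrix.mul_assoc, ← Matrix.conjTranspose_mul, hAE,
        Matrix.nonsing_inv_mul _ hAHdet]
    refine ⟨Ψ₀, hdual, ?_⟩
    have hup : l0Norm Ψ₀ ≤ (k + 1) ^ 2 := by
      rw [l0Norm_eq_sum]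
      have hrow : ∀ i : Fin (k + 1), {j : Fin m | Ψ₀ i j ≠ 0}.ncard ≤ k + 1 := by
        intro i
        have hsub : {j : Fin m | Ψ₀ i j ≠ 0} ⊆ Set.range (Fin.castLE hnm) := by
          intro j hj
          by_contra hr
          apply hj
          rw [hΨ₀, Matrix.mul_apply]
          refine Finset.sum_eq_zero fun b _ => ?_
          have : (Fin.castLE hnm b) ≠ j := fun h => hr ⟨b, h⟩
          simp [hEc, Matrix.conjTranspose_apply, this]
        calc {j : Fin m | Ψ₀ i j ≠ 0}.ncard
            ≤ (Set.range (Fin.castLE hnm)).ncard := Set.ncard_le_ncard hsub (Set.toFinite _)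
          _ = k + 1 := by
              rw [← Set.image_univ, Set.ncard_image_of_injective _ (Fin.castLE_injective hnm),
                Set.ncard_univ, Nat.card_eq_fintype_card, Fintype.card_fin]
      calc ∑ i : Fin (k + 1), {j : Fin m | Ψ₀ i j ≠ 0}.ncard
          ≤ ∑ _i : Fin (k + 1), (k + 1) := Finset.sum_le_sum fun i _ => hrow i
        _ = (k + 1) ^ 2 := by simp [Finset.sum_const, sq]
    exact le_antisymm hup (hlower Ψ₀ hdual)
  · rintro c ⟨Ψ, hΨ, rfl⟩
    exact hlower Ψ hΨ
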